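/- Let δ ≤ 0 ≤ Δ, κ ∈ [δ, Δ], and let ρ solve ρ'' + δρ = η with ρ(0) = ρ'(0) = 0, where η : [0,r] → ℝ is continuous and nonnegative. If x : [0,r] → ℝ solves x'' + κx = y with x(0) = x'(0) = 0 and |y(t)| ≤ η(t), then |x(t)| ≤ ρ(t) for all t ∈ [0, min{r, π_{(Δ+δ)/2}}]. -/

import Mathlib

open Real

noncomputable def kaulK (c τ : ℝ) : ℝ :=
  if 0 < c then Real.sinh (Real.sqrt c * τ) / Real.sqrt c
  else if c = 0 then τ
  else Real.sin (Real.sqrt (-c) * τ) / Real.sqrt (-c)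

noncomputable def kaulK' (c τ : ℝ) : ℝ :=
  if 0 < c then Real.cosh (Real.sqrt c * τ)
  else if c = 0 then 1
  else Real.cos (Real.sqrt (-c) * τ)

lemma kaulK_zero (c : ℝ) : kaulK c 0 = 0 := by
  unfold kaulK
  split_ifs <;> simp

lemma kaulK'_zero (c : ℝ) : kaulK' c 0 = 1 := by
  unfold kaulK'
  split_ifs <;> simp

lemma hasDerivAt_kaulK (c τ : ℝ) : HasDerivAt (kaulK c) (kaulK' c τ) τ := by
  rcases lt_trichotomy 0 c with hc | hc | hc
  · have hs : Real.sqrt c ≠ 0 := by positivity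
    have h : HasDerivAt (fun t => Real.sinh (Real.sqrt c * t) / Real.sqrt c)
        (Real.cosh (Real.sqrt c * τ)) τ := by
      have h1 : HasDerivAt (fun t : ℝ => Real.sqrt c * t) (Real.sqrt c) τ :=
        (hasDerivAt_id τ).const_mul _ |>.congr_deriv (by ring)
      have h2 := (Real.hasDerivAt_sinh (Real.sqrt c * τ)).comp τ h1
      have h3 := h2.div_const (Real.sqrt c)
      exact h3.congr_deriv (mul_div_cancel_right₀ _ hs)
    have : kaulK c = fun t => Real.sinh (Real.sqrt c * t) / Real.sqrt c := by
      funext t; unfold kaulK; rw [if_pos hc]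
    rw [this]
    have : kaulK' c τ = Real.cosh (Real.sqrt c * τ) := by
      unfold kaulK'; rw [if_pos hc]
    rw [this]; exact h
  · have : kaulK c = fun t => t := by
      funext t; unfold kaulK; rw [if_neg (by linarith), if_pos hc.symm]
    rw [this]
    have : kaulK' c τ = 1 := by
      unfold kaulK'; rw [if_neg (by linarith), if_pos hc.symm]
    rw [this]; exact hasDerivAt_id τ
  · have hs : Real.sqrt (-c) ≠ 0 := ne_of_gt (Real.sqrt_pos.2 (by linarith))
    have h : HasDerivAt (fun t => Real.sin (Real.sqrt (-c) * t) / Real.sqrt (-c))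
        (Real.cos (Real.sqrt (-c) * τ)) τ := by
      have h1 : HasDerivAt (fun t : ℝ => Real.sqrt (-c) * t) (Real.sqrt (-c)) τ :=
        (hasDerivAt_id τ).const_mul _ |>.congr_deriv (by ring)
      have h2 := (Real.hasDerivAt_sin (Real.sqrt (-c) * τ)).comp τ h1
      have h3 := h2.div_const (Real.sqrt (-c))
      exact h3.congr_deriv (mul_div_cancel_right₀ _ hs)
    have : kaulK c = fun t => Real.sin (Real.sqrt (-c) * t) / Real.sqrt (-c) := by
      funext t; unfold kaulK; rw [if_neg (by linarith), if_neg (by linarith)]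
    rw [this]
    have : kaulK' c τ = Real.cos (Real.sqrt (-c) * τ) := by
      unfold kaulK'; rw [if_neg (by linarith), if_neg (by linarith)]
    rw [this]; exact h

lemma hasDerivAt_kaulK' (c τ : ℝ) : HasDerivAt (kaulK' c) (c * kaulK c τ) τ := by
  rcases lt_trichotomy 0 c with hc | hc | hc
  · have hcs : Real.sqrt c * Real.sqrt c = c := Real.mul_self_sqrt hc.le
    have hs : Real.sqrt c ≠ 0 := by positivity
    have h1 : HasDerivAt (fun t : ℝ => Real.sqrt c * t) (Real.sqrt c) τ :=
      (hasDerivAt_id τ).const_mul _ |>.congr_deriv (by ring)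
    have h2 := (Real.hasDerivAt_cosh (Real.sqrt c * τ)).comp τ h1
    have : kaulK' c = fun t => Real.cosh (Real.sqrt c * t) := by
      funext t; unfold kaulK'; rw [if_pos hc]
    rw [this]
    have : c * kaulK c τ = Real.sinh (Real.sqrt c * τ) * Real.sqrt c := by
      unfold kaulK; rw [if_pos hc, ← mul_div_assoc, div_eq_iff hs]
      linear_combination (-Real.sinh (Real.sqrt c * τ)) * hcs
    rw [this]; exact h2
  · have : kaulK' c = fun _ => (1 : ℝ) := by
      funext t; unfold kaulK'; rw [if_neg (by linarith), if_pos hc.symm]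
    rw [this]
    have : c * kaulK c τ = 0 := by rw [← hc]; ring
    rw [this]; exact hasDerivAt_const τ 1
  · have hcs : Real.sqrt (-c) * Real.sqrt (-c) = -c := Real.mul_self_sqrt (by linarith)
    have hs : Real.sqrt (-c) ≠ 0 := ne_of_gt (Real.sqrt_pos.2 (by linarith))
    have h1 : HasDerivAt (fun t : ℝ => Real.sqrt (-c) * t) (Real.sqrt (-c)) τ :=
      (hasDerivAt_id τ).const_mul _ |>.congr_deriv (by ring)
    have h2 := (Real.hasDerivAt_cos (Real.sqrt (-c) * τ)).comp τ h1
    have : kaulK' c = fun t => Real.cos (Real.sqrt (-c) * t) := by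
      funext t; unfold kaulK'; rw [if_neg (by linarith), if_neg (by linarith)]
    rw [this]
    have : c * kaulK c τ = -Real.sin (Real.sqrt (-c) * τ) * Real.sqrt (-c) := by
      unfold kaulK; rw [if_neg (by linarith), if_neg (by linarith)]
      have hc' : c = -(Real.sqrt (-c) * Real.sqrt (-c)) := by rw [hcs]; ring
      rw [mul_div_assoc', div_eq_iff hs]; linear_combination Real.sin (Real.sqrt (-c) * τ) * hcs
    rw [this]; exact h2

lemma abs_kaulK'_le {a b t : ℝ} (ha : 0 ≤ a) (hba : b ≤ a) (ht : 0 ≤ t) :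
    |kaulK' b t| ≤ kaulK' a t := by
  have hone : ∀ d : ℝ, 0 ≤ d → (1 : ℝ) ≤ kaulK' d t := by
    intro d hd
    unfold kaulK'
    split_ifs with h1 h2
    · exact Real.one_le_cosh _
    · exact le_refl 1
    · exact absurd (lt_of_le_of_ne hd (Ne.symm h2)) h1
  rcases lt_trichotomy 0 b with hb | hb | hb
  · have h1 : kaulK' b t = Real.cosh (Real.sqrt b * t) := by
      unfold kaulK'; rw [if_pos hb]
    have h2 : kaulK' a t = Real.cosh (Real.sqrt a * t) := by
      unfold kaulK'; rw [if_pos (lt_of_lt_of_le hb hba)]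
    rw [h1, h2, abs_of_pos (Real.cosh_pos _), Real.cosh_le_cosh]
    rw [abs_of_nonneg (by positivity), abs_of_nonneg (by positivity)]
    exact mul_le_mul_of_nonneg_right (Real.sqrt_le_sqrt hba) ht
  · have h1 : kaulK' b t = 1 := by
      unfold kaulK'; rw [if_neg (by linarith), if_pos hb.symm]
    rw [h1, abs_one]
    exact hone a ha
  · have h1 : kaulK' b t = Real.cos (Real.sqrt (-b) * t) := by
      unfold kaulK'; rw [if_neg (by linarith), if_neg (by linarith)]
    rw [h1]
    calc |Real.cos (Real.sqrt (-b) * t)| ≤ 1 := Real.abs_cos_le_one _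
    _ ≤ kaulK' a t := hone a ha

lemma le_of_hasDerivAt_nonneg {f f' : ℝ → ℝ} {a b : ℝ} (hab : a ≤ b)
    (hf : ∀ t ∈ Set.Icc a b, HasDerivAt f (f' t) t)
    (h0 : ∀ t ∈ Set.Icc a b, 0 ≤ f' t) : f a ≤ f b := by
  have hmono : MonotoneOn f (Set.Icc a b) := by
    apply monotoneOn_of_deriv_nonneg (convex_Icc a b)
    · intro t htm
      exact (hf t htm).continuousAt.continuousWithinAt
    · intro t htm
      rw [interior_Icc] at htm
      exact ((hf t (Set.Ioo_subset_Icc_self htm)).differentiableAt).differentiableWithinAt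
    · intro t htm
      rw [interior_Icc] at htm
      rw [(hf t (Set.Ioo_subset_Icc_self htm)).deriv]
      exact h0 t (Set.Ioo_subset_Icc_self htm)
  exact hmono (Set.left_mem_Icc.2 hab) (Set.right_mem_Icc.2 hab) hab

lemma abs_kaulK_le {a b τ : ℝ} (ha : 0 ≤ a) (hba : b ≤ a) (hτ : 0 ≤ τ) :
    |kaulK b τ| ≤ kaulK a τ := by
  rw [abs_le]
  constructor
  · have h := le_of_hasDerivAt_nonneg (f := fun t => kaulK a t + kaulK b t)
      (f' := fun t => kaulK' a t + kaulK' b t) hτ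
      (fun t _ => (hasDerivAt_kaulK a t).add (hasDerivAt_kaulK b t))
      (fun t htm => by
        have h2 := abs_le.1 (abs_kaulK'_le ha hba htm.1)
        show 0 ≤ kaulK' a t + kaulK' b t
        linarith [h2.1])
    simp only [kaulK_zero, add_zero] at h
    linarith
  · have h := le_of_hasDerivAt_nonneg (f := fun t => kaulK a t - kaulK b t)
      (f' := fun t => kaulK' a t - kaulK' b t) hτ
      (fun t _ => (hasDerivAt_kaulK a t).sub (hasDerivAt_kaulK b t))
      (fun t htm => by
        have h2 := abs_le.1 (abs_kaulK'_le ha hba htm.1)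
        show 0 ≤ kaulK' a t - kaulK' b t
        linarith [h2.2])
    simp only [kaulK_zero, sub_zero] at h
    linarith

lemma kaul_main_aux (δ κ r : ℝ) (hδ : δ ≤ 0) (hδκ : δ ≤ κ)
    (ρ ρ' ρ'' x x' x'' η y : ℝ → ℝ)
    (hη0 : ∀ t ∈ Set.Icc (0 : ℝ) r, 0 ≤ η t)
    (hρ : ∀ t ∈ Set.Icc (0 : ℝ) r, HasDerivAt ρ (ρ' t) t)
    (hρ' : ∀ t ∈ Set.Icc (0 : ℝ) r, HasDerivAt ρ' (ρ'' t) t)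
    (hρode : ∀ t ∈ Set.Icc (0 : ℝ) r, ρ'' t + δ * ρ t = η t)
    (hρ0 : ρ 0 = 0) (hρ0' : ρ' 0 = 0)
    (hx : ∀ t ∈ Set.Icc (0 : ℝ) r, HasDerivAt x (x' t) t)
    (hx' : ∀ t ∈ Set.Icc (0 : ℝ) r, HasDerivAt x' (x'' t) t)
    (hxode : ∀ t ∈ Set.Icc (0 : ℝ) r, x'' t + κ * x t = y t)
    (hx0 : x 0 = 0) (hx0' : x' 0 = 0)
    (hy : ∀ t ∈ Set.Icc (0 : ℝ) r, |y t| ≤ η t)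
    (t : ℝ) (ht : t ∈ Set.Icc (0 : ℝ) r) : x t ≤ ρ t := by
  obtain ⟨ht0, htr⟩ := ht
  set F : ℝ → ℝ := fun s => kaulK (-δ) (t - s) * ρ' s + kaulK' (-δ) (t - s) * ρ s
      - (kaulK (-κ) (t - s) * x' s + kaulK' (-κ) (t - s) * x s) with hF
  have hsub : Set.Icc (0:ℝ) t ⊆ Set.Icc (0:ℝ) r := Set.Icc_subset_Icc le_rfl htr
  have hKd : ∀ c : ℝ, ∀ s : ℝ, HasDerivAt (fun u => kaulK c (t - u)) (-(kaulK' c (t - s))) s := by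
    intro c s
    have h1 : HasDerivAt (fun u : ℝ => t - u) (-1) s := (hasDerivAt_id s).const_sub t
    have h2 := (hasDerivAt_kaulK c (t - s)).comp s h1
    exact h2.congr_deriv (by ring)
  have hK'd : ∀ c : ℝ, ∀ s : ℝ, HasDerivAt (fun u => kaulK' c (t - u)) (-(c * kaulK c (t - s))) s := by
    intro c s
    have h1 : HasDerivAt (fun u : ℝ => t - u) (-1) s := (hasDerivAt_id s).const_sub t
    have h2 := (hasDerivAt_kaulK' c (t - s)).comp s h1
    exact h2.congr_deriv (by ring)
  have hFd : ∀ s ∈ Set.Icc (0:ℝ) t,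
      HasDerivAt F (kaulK (-δ) (t - s) * η s - kaulK (-κ) (t - s) * y s) s := by
    intro s hs
    have hsr := hsub hs
    have h1 := ((hKd (-δ) s).mul (hρ' s hsr)).add (((hK'd (-δ) s)).mul (hρ s hsr))
    have h2 := ((hKd (-κ) s).mul (hx' s hsr)).add (((hK'd (-κ) s)).mul (hx s hsr))
    have h3 := h1.sub h2
    refine HasDerivAt.congr_deriv h3 ?_
    have e1 := hρode s hsr
    have e2 := hxode s hsr
    linear_combination kaulK (-δ) (t - s) * e1 - kaulK (-κ) (t - s) * e2
  have hF0 : F 0 = 0 := by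
    simp [hF, hρ0, hρ0', hx0, hx0']
  have hFt : F t = ρ t - x t := by
    simp [hF, kaulK_zero, kaulK'_zero]
  have hnonneg : ∀ s ∈ Set.Icc (0:ℝ) t,
      0 ≤ kaulK (-δ) (t - s) * η s - kaulK (-κ) (t - s) * y s := by
    intro s hs
    have hsr := hsub hs
    have hτ : 0 ≤ t - s := by linarith [hs.2]
    have hKle : |kaulK (-κ) (t - s)| ≤ kaulK (-δ) (t - s) :=
      abs_kaulK_le (by linarith) (by linarith) hτ
    have hKnn : 0 ≤ kaulK (-δ) (t - s) := le_trans (abs_nonneg _) hKle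
    have h1 : kaulK (-κ) (t - s) * y s ≤ |kaulK (-κ) (t - s)| * |y s| := by
      calc kaulK (-κ) (t - s) * y s ≤ |kaulK (-κ) (t - s) * y s| := le_abs_self _
      _ = |kaulK (-κ) (t - s)| * |y s| := abs_mul _ _
    have h2 : |kaulK (-κ) (t - s)| * |y s| ≤ kaulK (-δ) (t - s) * η s :=
      mul_le_mul hKle (hy s hsr) (abs_nonneg _) hKnn
    linarith
  have := le_of_hasDerivAt_nonneg ht0 hFd hnonneg
  rw [hF0, hFt] at this
  linarith

theorem kaul_comparison_scalar
    (δ Δ κ r : ℝ) (hr : 0 ≤ r) (hδ : δ ≤ 0) (hΔ : 0 ≤ Δ)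
    (hδκ : δ ≤ κ) (hκΔ : κ ≤ Δ)
    (ρ ρ' ρ'' x x' x'' η y : ℝ → ℝ)
    (hηc : ContinuousOn η (Set.Icc 0 r))
    (hη0 : ∀ t ∈ Set.Icc (0 : ℝ) r, 0 ≤ η t)
    (hρ : ∀ t ∈ Set.Icc (0 : ℝ) r, HasDerivAt ρ (ρ' t) t)
    (hρ' : ∀ t ∈ Set.Icc (0 : ℝ) r, HasDerivAt ρ' (ρ'' t) t)
    (hρode : ∀ t ∈ Set.Icc (0 : ℝ) r, ρ'' t + δ * ρ t = η t)
    (hρ0 : ρ 0 = 0) (hρ0' : ρ' 0 = 0)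
    (hx : ∀ t ∈ Set.Icc (0 : ℝ) r, HasDerivAt x (x' t) t)
    (hx' : ∀ t ∈ Set.Icc (0 : ℝ) r, HasDerivAt x' (x'' t) t)
    (hxode : ∀ t ∈ Set.Icc (0 : ℝ) r, x'' t + κ * x t = y t)
    (hx0 : x 0 = 0) (hx0' : x' 0 = 0)
    (hy : ∀ t ∈ Set.Icc (0 : ℝ) r, |y t| ≤ η t) :
    ∀ t ∈ Set.Icc (0 : ℝ) r,
      (0 < (Δ + δ) / 2 → t ≤ Real.pi / Real.sqrt ((Δ + δ) / 2)) →
      |x t| ≤ ρ t := by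
  intro t ht _
  rw [abs_le]
  constructor
  · have h := kaul_main_aux δ κ r hδ hδκ ρ ρ' ρ''
      (fun s => -x s) (fun s => -x' s) (fun s => -x'' s) η (fun s => -y s)
      hη0 hρ hρ' hρode hρ0 hρ0'
      (fun s hs => (hx s hs).neg) (fun s hs => (hx' s hs).neg)
      (fun s hs => by have := hxode s hs; beta_reduce; linarith)
      (by simp [hx0]) (by simp [hx0'])
      (fun s hs => by simpa using hy s hs) t ht
    beta_reduce at h
    linarith
  · exact kaul_main_aux δ κ r hδ hδκ ρ ρ' ρ'' x x' x'' η y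
      hη0 hρ hρ' hρode hρ0 hρ0' hx hx' hxode hx0 hx0' hy t ht
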